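/- Let T_{3,3} be the tree obtained from two disjoint copies of the complete binary tree B_3 (7 vertices each) by joining their roots with an edge. Then the parity vertex chromatic number of T_{3,3} equals 4. -/

import Mathlib

open SimpleGraph

/-- A colouring `c` of the vertices of `G` with `k` colours is a *parity vertex colouring*
if every (nonempty) path in `G` contains an odd number of occurrences of some colour. -/
def IsParityColoring {V : Type} (G : SimpleGraph V) {k : ℕ} (c : V → Fin k) : Prop :=
  ∀ ⦃u v : V⦄ (p : G.Walk u v), p.IsPath → ∃ i : Fin k, Odd ((p.support.map c).count i)

/-- The parity vertex chromatic number `χ_p(G)`: the least number of colours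
in a parity vertex colouring of `G`. -/
noncomputable def parityChromaticNumber {V : Type} (G : SimpleGraph V) : ℕ :=
  sInf {k | ∃ c : V → Fin k, IsParityColoring G c}

/-- The tree `T_{3,3}`: two disjoint copies of the complete binary tree with 3 layers
(vertices `0..6` and `7..13`, heap indexing inside each copy) with their roots `0` and `7`
joined by an edge. -/
def T33 : SimpleGraph (Fin 14) :=
  SimpleGraph.fromRel (fun i j =>
    ((i : ℕ) < 7 ∧ (j : ℕ) < 7 ∧ ((j : ℕ) = 2 * (i : ℕ) + 1 ∨ (j : ℕ) = 2 * (i : ℕ) + 2)) ∨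
    (7 ≤ (i : ℕ) ∧ 7 ≤ (j : ℕ) ∧
      ((j : ℕ) = 2 * ((i : ℕ) - 7) + 1 + 7 ∨ (j : ℕ) = 2 * ((i : ℕ) - 7) + 2 + 7)) ∨
    ((i : ℕ) = 0 ∧ (j : ℕ) = 7))

instance T33.adjDecidable : DecidableRel T33.Adj := fun a b =>
  inferInstanceAs (Decidable (a ≠ b ∧ _))

/-- From a nonempty list whose consecutive elements are adjacent, produce a walk. -/
lemma exists_walk_of_chain' {V : Type} (G : SimpleGraph V) :
    ∀ (l : List V), l.Chain' G.Adj → l ≠ [] → ∃ (u v : V) (p : G.Walk u v), p.support = l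
  | [], _, h => absurd rfl h
  | [a], _, _ => ⟨a, a, Walk.nil, rfl⟩
  | a :: b :: t, hc, _ => by
      obtain ⟨hadj, hc'⟩ := List.isChain_cons_cons.mp hc
      obtain ⟨u, v, p, hp⟩ := exists_walk_of_chain' G (b :: t) hc' (by simp)
      have hu : u = b := by
        have h2 := p.support_eq_cons
        rw [hp] at h2
        injection h2 with h3 _
        exact h3.symm
      subst hu
      exact ⟨a, v, Walk.cons hadj p, by simp [hp]⟩

lemma isParityColoring_iff {V : Type} [DecidableEq V] (G : SimpleGraph V) {k : ℕ} (c : V → Fin k) :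
    IsParityColoring G c ↔ ∀ l : List V, l ≠ [] → l.Nodup → l.Chain' G.Adj →
      ∃ i : Fin k, Odd ((l.map c).count i) := by
  constructor
  · intro h l hne hnd hch
    obtain ⟨u, v, p, hp⟩ := exists_walk_of_chain' G l hch hne
    have := h p (by rw [Walk.isPath_def, hp]; exact hnd)
    rwa [hp] at this
  · intro h u v p hp
    exact h p.support p.support_ne_nil ((Walk.isPath_def p).mp hp) p.isChain_adj_support

/-! ### Lower bound machinery -/

/-- Parity vector (as an element of `Fin 8`) of the colour counts of a list. -/
def pvec (l : List (Fin 3)) : Fin 8 :=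
  ⟨l.count 0 % 2 + 2 * (l.count 1 % 2) + 4 * (l.count 2 % 2), by omega⟩

/-- The (vertex list of the) path from `u` to the root in `B_3`. -/
def rootPath : Fin 7 → List (Fin 7) :=
  ![[0], [1,0], [2,0], [3,1,0], [4,1,0], [5,2,0], [6,2,0]]

/-- The supports of all paths in `B_3` (one orientation each, incl. single vertices). -/
def B3paths : List (List (Fin 7)) :=
  [[0],
   [0,1],
   [0,2],
   [0,1,3],
   [0,1,4],
   [0,2,5],
   [0,2,6],
   [1,0],
   [1],
   [1,0,2],
   [1,3],
   [1,4],
   [1,0,2,5],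
   [1,0,2,6],
   [2,0],
   [2,0,1],
   [2],
   [2,0,1,3],
   [2,0,1,4],
   [2,5],
   [2,6],
   [3,1,0],
   [3,1],
   [3,1,0,2],
   [3],
   [3,1,4],
   [3,1,0,2,5],
   [3,1,0,2,6],
   [4,1,0],
   [4,1],
   [4,1,0,2],
   [4,1,3],
   [4],
   [4,1,0,2,5],
   [4,1,0,2,6],
   [5,2,0],
   [5,2,0,1],
   [5,2],
   [5,2,0,1,3],
   [5,2,0,1,4],
   [5],
   [5,2,6],
   [6,2,0],
   [6,2,0,1],
   [6,2],
   [6,2,0,1,3],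
   [6,2,0,1,4],
   [6,2,5],
   [6]]

/-- `g` satisfies the parity condition on all paths of `B_3`. -/
def GoodB3 (g : Fin 7 → Fin 3) : Prop := ∀ l ∈ B3paths, pvec (l.map g) ≠ 0

/-- The set of parity vectors of root paths. -/
def Rset (g : Fin 7 → Fin 3) : Finset (Fin 8) :=
  Finset.univ.image fun u => pvec ((rootPath u).map g)

lemma pvec_eq_iff (l1 l2 : List (Fin 3)) : pvec l1 = pvec l2 ↔
    (l1.count 0 % 2 = l2.count 0 % 2 ∧ l1.count 1 % 2 = l2.count 1 % 2 ∧
      l1.count 2 % 2 = l2.count 2 % 2) := by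
  simp only [pvec, Fin.mk.injEq]
  omega

lemma exists_odd_iff (l : List (Fin 3)) :
    (∃ i : Fin 3, Odd (l.count i)) ↔ pvec l ≠ 0 := by
  have hv : (pvec l).val = l.count 0 % 2 + 2 * (l.count 1 % 2) + 4 * (l.count 2 % 2) := rfl
  rw [Ne, ← Fin.val_inj, hv]
  constructor
  · rintro ⟨i, hi⟩
    rw [Nat.odd_iff] at hi
    have h3 : ∀ j : Fin 3, j = 0 ∨ j = 1 ∨ j = 2 := by decide
    rcases h3 i with rfl | rfl | rfl <;> simp only [Fin.val_zero] <;> omega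
  · intro h
    by_contra hn
    push_neg at hn
    have h0 := hn 0; have h1 := hn 1; have h2 := hn 2
    rw [Nat.not_odd_iff] at h0 h1 h2
    simp only [Fin.val_zero] at h
    omega

lemma cross_iff (l1 l2 : List (Fin 3)) :
    (∃ i : Fin 3, Odd ((l1 ++ l2.reverse).count i)) ↔ pvec l1 ≠ pvec l2 := by
  constructor
  · rintro ⟨i, hi⟩ heq
    rw [pvec_eq_iff] at heq
    rw [Nat.odd_iff, List.count_append, List.count_reverse] at hi
    have h3 : ∀ j : Fin 3, j = 0 ∨ j = 1 ∨ j = 2 := by decide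
    rcases h3 i with rfl | rfl | rfl <;> omega
  · intro h
    by_contra hn
    push_neg at hn
    have h0 := hn 0; have h1 := hn 1; have h2 := hn 2
    rw [Nat.not_odd_iff, List.count_append, List.count_reverse] at h0 h1 h2
    rw [Ne, pvec_eq_iff] at h
    exact h (by omega)

def emb1 : Fin 7 → Fin 14 := fun i => ⟨i.val, by have := i.isLt; omega⟩
def emb2 : Fin 7 → Fin 14 := fun i => ⟨i.val + 7, by have := i.isLt; omega⟩

def chainb {α : Type} (r : α → α → Bool) : List α → Bool
  | [] => true
  | [_] => true
  | a :: b :: t => r a b && chainb r (b :: t)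

lemma chainb_iff {α : Type} (r : α → α → Prop) [DecidableRel r] :
    ∀ l : List α, l.Chain' r ↔ chainb (fun a b => decide (r a b)) l = true
  | [] => by simp [chainb, List.Chain']
  | [a] => by simp [chainb, List.Chain']
  | a :: b :: t => by
      have ih := chainb_iff r (b :: t)
      simp only [List.Chain'] at ih ⊢
      rw [List.isChain_cons_cons, ih]
      simp [chainb]

def adjB : Fin 14 → Fin 14 → Bool := fun a b => decide (T33.Adj a b)

lemma hB1 : ∀ l ∈ B3paths, (l.map emb1) ≠ [] ∧ (l.map emb1).Nodup ∧
    chainb adjB (l.map emb1) = true := by decide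

lemma hB2 : ∀ l ∈ B3paths, (l.map emb2) ≠ [] ∧ (l.map emb2).Nodup ∧
    chainb adjB (l.map emb2) = true := by decide

lemma hCrossPath : ∀ u v : Fin 7,
    ((rootPath u).map emb1 ++ ((rootPath v).map emb2).reverse) ≠ [] ∧
    ((rootPath u).map emb1 ++ ((rootPath v).map emb2).reverse).Nodup ∧
    chainb adjB ((rootPath u).map emb1 ++ ((rootPath v).map emb2).reverse) = true := by decide

lemma hRP : ∀ u : Fin 7, rootPath u ∈ B3paths := by decide

instance (g : Fin 7 → Fin 3) : Decidable (GoodB3 g) :=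
  inferInstanceAs (Decidable (∀ l ∈ B3paths, pvec (l.map g) ≠ 0))

set_option maxRecDepth 4000 in
set_option maxHeartbeats 4000000 in
lemma key1c : ∀ a b c d e f h : Fin 3, GoodB3 ![a,b,c,d,e,f,h] →
    3 ≤ (Rset ![a,b,c,d,e,f,h]).card ∧
    ((7 : Fin 8) ∈ Rset ![a,b,c,d,e,f,h] ∨ 5 ≤ (Rset ![a,b,c,d,e,f,h]).card) := by decide

lemma key1 (g : Fin 7 → Fin 3) (hg : GoodB3 g) :
    3 ≤ (Rset g).card ∧ ((7 : Fin 8) ∈ Rset g ∨ 5 ≤ (Rset g).card) := by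
  have he : g = ![g 0, g 1, g 2, g 3, g 4, g 5, g 6] := by
    funext i; fin_cases i <;> rfl
  rw [he] at hg ⊢
  exact key1c _ _ _ _ _ _ _ hg

lemma key2 : ∀ A B : Finset (Fin 8), 0 ∉ A → 0 ∉ B → 3 ≤ A.card → 3 ≤ B.card →
    (7 ∈ A ∨ 5 ≤ A.card) → (7 ∈ B ∨ 5 ≤ B.card) → ∃ x, x ∈ A ∧ x ∈ B := by
  intro A B h0A h0B h3A h3B h7A h7B
  by_contra hc
  push_neg at hc
  have hdisj : Disjoint A B := Finset.disjoint_left.mpr fun {x} hx hy => hc x hx hy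
  have hsub : A ∪ B ⊆ Finset.univ.erase (0 : Fin 8) := by
    intro x hx
    rcases Finset.mem_union.mp hx with hx | hx
    · exact Finset.mem_erase.mpr ⟨fun h => h0A (h ▸ hx), Finset.mem_univ x⟩
    · exact Finset.mem_erase.mpr ⟨fun h => h0B (h ▸ hx), Finset.mem_univ x⟩
  have hle : A.card + B.card ≤ 7 := by
    have h1 := Finset.card_le_card hsub
    rw [Finset.card_union_of_disjoint hdisj] at h1
    have h2 : (Finset.univ.erase (0 : Fin 8)).card = 7 := by
      rw [Finset.card_erase_of_mem (Finset.mem_univ _)]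
      simp
    omega
  rcases h7A with h7A | h5A
  · rcases h7B with h7B | h5B
    · exact hc 7 h7A h7B
    · omega
  · omega

lemma factB : ¬ ∃ c : Fin 14 → Fin 3, IsParityColoring T33 c := by
  rintro ⟨c, hc⟩
  rw [isParityColoring_iff] at hc
  have hg1 : GoodB3 (fun i => c (emb1 i)) := by
    intro l hl
    obtain ⟨hne, hnd, hch⟩ := hB1 l hl
    have h1 := hc _ hne hnd ((chainb_iff T33.Adj _).mpr hch)
    rw [List.map_map] at h1
    exact (exists_odd_iff _).mp h1
  have hg2 : GoodB3 (fun i => c (emb2 i)) := by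
    intro l hl
    obtain ⟨hne, hnd, hch⟩ := hB2 l hl
    have h1 := hc _ hne hnd ((chainb_iff T33.Adj _).mpr hch)
    rw [List.map_map] at h1
    exact (exists_odd_iff _).mp h1
  have h1 := key1 _ hg1
  have h2 := key1 _ hg2
  have h01 : (0 : Fin 8) ∉ Rset (fun i => c (emb1 i)) := by
    intro h
    obtain ⟨u, _, hu⟩ := Finset.mem_image.mp h
    exact hg1 _ (hRP u) hu
  have h02 : (0 : Fin 8) ∉ Rset (fun i => c (emb2 i)) := by
    intro h
    obtain ⟨u, _, hu⟩ := Finset.mem_image.mp h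
    exact hg2 _ (hRP u) hu
  obtain ⟨x, hx1, hx2⟩ := key2 _ _ h01 h02 h1.1 h2.1 h1.2 h2.2
  obtain ⟨u, _, hu⟩ := Finset.mem_image.mp hx1
  obtain ⟨v, _, hv⟩ := Finset.mem_image.mp hx2
  obtain ⟨hne, hnd, hch⟩ := hCrossPath u v
  have hodd := hc _ hne hnd ((chainb_iff T33.Adj _).mpr hch)
  rw [List.map_append, List.map_reverse, List.map_map, List.map_map] at hodd
  exact (cross_iff _ _).mp hodd (hu.trans hv.symm)

/-! ### Upper bound -/

/-- The supports of all paths of `T33` (both orientations, incl. single vertices). -/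
def PS : List (List (Fin 14)) :=
  [[0],
   [0,1],
   [0,2],
   [0,1,3],
   [0,1,4],
   [0,2,5],
   [0,2,6],
   [0,7],
   [0,7,8],
   [0,7,9],
   [0,7,8,10],
   [0,7,8,11],
   [0,7,9,12],
   [0,7,9,13],
   [1,0],
   [1],
   [1,0,2],
   [1,3],
   [1,4],
   [1,0,2,5],
   [1,0,2,6],
   [1,0,7],
   [1,0,7,8],
   [1,0,7,9],
   [1,0,7,8,10],
   [1,0,7,8,11],
   [1,0,7,9,12],
   [1,0,7,9,13],
   [2,0],
   [2,0,1],
   [2],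
   [2,0,1,3],
   [2,0,1,4],
   [2,5],
   [2,6],
   [2,0,7],
   [2,0,7,8],
   [2,0,7,9],
   [2,0,7,8,10],
   [2,0,7,8,11],
   [2,0,7,9,12],
   [2,0,7,9,13],
   [3,1,0],
   [3,1],
   [3,1,0,2],
   [3],
   [3,1,4],
   [3,1,0,2,5],
   [3,1,0,2,6],
   [3,1,0,7],
   [3,1,0,7,8],
   [3,1,0,7,9],
   [3,1,0,7,8,10],
   [3,1,0,7,8,11],
   [3,1,0,7,9,12],
   [3,1,0,7,9,13],
   [4,1,0],
   [4,1],
   [4,1,0,2],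
   [4,1,3],
   [4],
   [4,1,0,2,5],
   [4,1,0,2,6],
   [4,1,0,7],
   [4,1,0,7,8],
   [4,1,0,7,9],
   [4,1,0,7,8,10],
   [4,1,0,7,8,11],
   [4,1,0,7,9,12],
   [4,1,0,7,9,13],
   [5,2,0],
   [5,2,0,1],
   [5,2],
   [5,2,0,1,3],
   [5,2,0,1,4],
   [5],
   [5,2,6],
   [5,2,0,7],
   [5,2,0,7,8],
   [5,2,0,7,9],
   [5,2,0,7,8,10],
   [5,2,0,7,8,11],
   [5,2,0,7,9,12],
   [5,2,0,7,9,13],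
   [6,2,0],
   [6,2,0,1],
   [6,2],
   [6,2,0,1,3],
   [6,2,0,1,4],
   [6,2,5],
   [6],
   [6,2,0,7],
   [6,2,0,7,8],
   [6,2,0,7,9],
   [6,2,0,7,8,10],
   [6,2,0,7,8,11],
   [6,2,0,7,9,12],
   [6,2,0,7,9,13],
   [7,0],
   [7,0,1],
   [7,0,2],
   [7,0,1,3],
   [7,0,1,4],
   [7,0,2,5],
   [7,0,2,6],
   [7],
   [7,8],
   [7,9],
   [7,8,10],
   [7,8,11],
   [7,9,12],
   [7,9,13],
   [8,7,0],
   [8,7,0,1],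
   [8,7,0,2],
   [8,7,0,1,3],
   [8,7,0,1,4],
   [8,7,0,2,5],
   [8,7,0,2,6],
   [8,7],
   [8],
   [8,7,9],
   [8,10],
   [8,11],
   [8,7,9,12],
   [8,7,9,13],
   [9,7,0],
   [9,7,0,1],
   [9,7,0,2],
   [9,7,0,1,3],
   [9,7,0,1,4],
   [9,7,0,2,5],
   [9,7,0,2,6],
   [9,7],
   [9,7,8],
   [9],
   [9,7,8,10],
   [9,7,8,11],
   [9,12],
   [9,13],
   [10,8,7,0],
   [10,8,7,0,1],
   [10,8,7,0,2],
   [10,8,7,0,1,3],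
   [10,8,7,0,1,4],
   [10,8,7,0,2,5],
   [10,8,7,0,2,6],
   [10,8,7],
   [10,8],
   [10,8,7,9],
   [10],
   [10,8,11],
   [10,8,7,9,12],
   [10,8,7,9,13],
   [11,8,7,0],
   [11,8,7,0,1],
   [11,8,7,0,2],
   [11,8,7,0,1,3],
   [11,8,7,0,1,4],
   [11,8,7,0,2,5],
   [11,8,7,0,2,6],
   [11,8,7],
   [11,8],
   [11,8,7,9],
   [11,8,10],
   [11],
   [11,8,7,9,12],
   [11,8,7,9,13],
   [12,9,7,0],
   [12,9,7,0,1],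
   [12,9,7,0,2],
   [12,9,7,0,1,3],
   [12,9,7,0,1,4],
   [12,9,7,0,2,5],
   [12,9,7,0,2,6],
   [12,9,7],
   [12,9,7,8],
   [12,9],
   [12,9,7,8,10],
   [12,9,7,8,11],
   [12],
   [12,9,13],
   [13,9,7,0],
   [13,9,7,0,1],
   [13,9,7,0,2],
   [13,9,7,0,1,3],
   [13,9,7,0,1,4],
   [13,9,7,0,2,5],
   [13,9,7,0,2,6],
   [13,9,7],
   [13,9,7,8],
   [13,9],
   [13,9,7,8,10],
   [13,9,7,8,11],
   [13,9,12],
   [13]]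

/-- An explicit parity 4-colouring of `T33`. -/
def c4 : Fin 14 → Fin 4 := ![0, 1, 1, 2, 2, 2, 2, 1, 2, 2, 3, 3, 3, 3]

set_option maxRecDepth 100000 in
lemma ps_singleton : ∀ a : Fin 14, [a] ∈ PS := by decide

set_option maxRecDepth 100000 in
lemma ps_closure : ∀ l ∈ PS, ∀ a : Fin 14, T33.Adj a l.headI → a ∉ l → a :: l ∈ PS := by
  decide

lemma mem_PS : ∀ l : List (Fin 14), l ≠ [] → l.Nodup → l.Chain' T33.Adj → l ∈ PS := by
  intro l
  induction l with
  | nil => intro h; exact absurd rfl h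
  | cons a t ih =>
    intro _ hnd hch
    cases t with
    | nil => exact ps_singleton a
    | cons b t' =>
      have hadj : T33.Adj a b := (List.isChain_cons_cons.mp hch).1
      have htl : (b :: t') ∈ PS :=
        ih (by simp) (List.nodup_cons.mp hnd).2 (List.isChain_cons_cons.mp hch).2
      exact ps_closure _ htl a hadj (List.nodup_cons.mp hnd).1

set_option maxRecDepth 100000 in
lemma ps_odd : ∀ l ∈ PS, ∃ i : Fin 4, Odd ((l.map c4).count i) := by decide

lemma factA : IsParityColoring T33 c4 := by
  rw [isParityColoring_iff]
  intro l hne hnd hch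
  exact ps_odd l (mem_PS l hne hnd hch)

/-- The parity vertex chromatic number of `T_{3,3}` equals 4. -/
theorem parityChromatic_T33 : parityChromaticNumber T33 = 4 := by
  have h4 : 4 ∈ {k | ∃ c : Fin 14 → Fin k, IsParityColoring T33 c} := ⟨c4, factA⟩
  refine le_antisymm (Nat.sInf_le h4) (le_csInf ⟨4, h4⟩ ?_)
  rintro k ⟨c, hc⟩
  by_contra hlt
  push_neg at hlt
  have hk3 : k ≤ 3 := by omega
  apply factB
  refine ⟨Fin.castLE hk3 ∘ c, ?_⟩
  intro u v p hp
  obtain ⟨i, hi⟩ := hc p hp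
  refine ⟨Fin.castLE hk3 i, ?_⟩
  have hmm : p.support.map (Fin.castLE hk3 ∘ c) = (p.support.map c).map (Fin.castLE hk3) := by
    rw [List.map_map]
  rw [hmm, List.count_map_of_injective _ _ (Fin.castLE_injective hk3)]
  exact hi
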